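/- For every μ ∈ (0,1) and σ² > 0, the mean of the Simplex distribution equals its location parameter: ∫₀¹ y · f(y; μ, σ²) dy = μ. -/

import Mathlib

open MeasureTheory Real

/-- Unit deviance of the Simplex distribution. -/
noncomputable def simplexDev (y μ : ℝ) : ℝ :=
  (y - μ) ^ 2 / (y * (1 - y) * μ ^ 2 * (1 - μ) ^ 2)

/-- Density of the Simplex distribution. -/
noncomputable def simplexPdf (μ σ2 y : ℝ) : ℝ :=
  (2 * π * σ2 * (y * (1 - y)) ^ 3) ^ (-(1/2 : ℝ)) * Real.exp (-simplexDev y μ / (2 * σ2))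

open Set


lemma img_phi {c : ℝ} (hc : 0 < c) :
    (fun t : ℝ => t - c / t) '' Ioi 0 = univ := by
  apply eq_univ_of_forall
  intro u
  have hs : 0 ≤ u ^ 2 + 4 * c := by nlinarith
  set s := Real.sqrt (u ^ 2 + 4 * c) with hsdef
  have hs2 : s ^ 2 = u ^ 2 + 4 * c := Real.sq_sqrt hs
  have hsu : |u| < s := by
    have : Real.sqrt (u ^ 2) < s := by
      apply Real.sqrt_lt_sqrt (sq_nonneg u); nlinarith
    simpa [Real.sqrt_sq_eq_abs] using this
  have hus : 0 < u + s := by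
    have h1 := neg_abs_le u
    have h2 := neg_lt_of_abs_lt hsu
    linarith
  have ht : 0 < (u + s) / 2 := by linarith
  refine ⟨(u + s) / 2, ht, ?_⟩
  have hne : u + s ≠ 0 := hus.ne'
  field_simp
  nlinarith [hs2]

lemma img_inv {c : ℝ} (hc : 0 < c) :
    (fun s : ℝ => c / s) '' Ioi 0 = Ioi 0 := by
  ext x
  constructor
  · rintro ⟨s, hs, rfl⟩; exact div_pos hc hs
  · intro hx; exact ⟨c / x, div_pos hc hx, by field_simp⟩

lemma img_sq : (fun t : ℝ => t ^ 2) '' Ioi 0 = Ioi 0 := by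
  ext x
  constructor
  · rintro ⟨t, ht, rfl⟩; exact pow_pos (show (0:ℝ) < t from ht) 2
  · intro hx
    exact ⟨Real.sqrt x, Real.sqrt_pos.2 hx, Real.sq_sqrt hx.le⟩

lemma phi_deriv {c t : ℝ} (ht : 0 < t) :
    HasDerivWithinAt (fun t : ℝ => t - c / t) (1 + c / t ^ 2) (Ioi 0) t := by
  have h : HasDerivAt (fun t : ℝ => t - c / t)
      (1 - (0 * t - c * 1) / t ^ 2) t :=
    (hasDerivAt_id t).sub (((hasDerivAt_const t c).div (hasDerivAt_id t) ht.ne'))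
  have : (1 : ℝ) - (0 * t - c * 1) / t ^ 2 = 1 + c / t ^ 2 := by ring
  exact (this ▸ h).hasDerivWithinAt

lemma phi_inj {c : ℝ} (hc : 0 < c) : InjOn (fun t : ℝ => t - c / t) (Ioi 0) := by
  have : StrictMonoOn (fun t : ℝ => t - c / t) (Ioi 0) := by
    intro x hx y hy hxy
    simp only
    have hx' : (0:ℝ) < x := hx
    have hy' : (0:ℝ) < y := hy
    have : c / y < c / x := div_lt_div_of_pos_left hc hx' hxy
    linarith
  exact this.injOn

/-- Glasser master theorem ingredient. -/
lemma glasser {a c : ℝ} (ha : 0 < a) (hc : 0 < c) :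
    ∫ t in Ioi (0:ℝ), (1 + c / t ^ 2) * Real.exp (-a * (t - c / t) ^ 2)
      = Real.sqrt (π / a) := by
  have key := integral_image_eq_integral_abs_deriv_smul (f := fun t : ℝ => t - c / t)
      (f' := fun t : ℝ => 1 + c / t ^ 2) measurableSet_Ioi
      (fun t ht => phi_deriv ht) (phi_inj hc) (fun u => Real.exp (-a * u ^ 2))
  rw [img_phi hc] at key
  rw [Measure.restrict_univ] at key
  rw [integral_gaussian] at key
  rw [key]
  apply setIntegral_congr_fun measurableSet_Ioi
  intro t ht
  have ht' : (0:ℝ) < t := ht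
  have : (0:ℝ) < 1 + c / t ^ 2 := by positivity
  simp [abs_of_pos this, smul_eq_mul]

lemma refl_int {a c : ℝ} (hc : 0 < c) :
    ∫ t in Ioi (0:ℝ), Real.exp (-a * (t - c / t) ^ 2)
      = ∫ t in Ioi (0:ℝ), (c / t ^ 2) * Real.exp (-a * (t - c / t) ^ 2) := by
  have hderiv : ∀ s ∈ Ioi (0:ℝ),
      HasDerivWithinAt (fun s : ℝ => c / s) (-(c / s ^ 2)) (Ioi 0) s := by
    intro s hs
    have hs' : (0:ℝ) < s := hs
    have h : HasDerivAt (fun s : ℝ => c / s) ((0 * s - c * 1) / s ^ 2) s :=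
      (hasDerivAt_const s c).div (hasDerivAt_id s) hs'.ne'
    have : (0 * s - c * 1) / s ^ 2 = -(c / s ^ 2) := by ring
    exact (this ▸ h).hasDerivWithinAt
  have hinj : InjOn (fun s : ℝ => c / s) (Ioi 0) := by
    intro x hx y hy h
    have hx' : (0:ℝ) < x := hx
    have hy' : (0:ℝ) < y := hy
    simp only at h
    field_simp at h
    exact h.symm
  have key := integral_image_eq_integral_abs_deriv_smul (f := fun s : ℝ => c / s)
      (f' := fun s : ℝ => -(c / s ^ 2)) measurableSet_Ioi hderiv hinj
      (fun t => Real.exp (-a * (t - c / t) ^ 2))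
  rw [img_inv hc] at key
  rw [key]
  apply setIntegral_congr_fun measurableSet_Ioi
  intro s hs
  have hs' : (0:ℝ) < s := hs
  have h1 : |(-(c / s ^ 2))| = c / s ^ 2 := by
    rw [abs_neg, abs_of_pos (by positivity)]
  have h3 : c / (c / s) = s := by field_simp
  have h2 : (c / s - c / (c / s)) ^ 2 = (s - c / s) ^ 2 := by rw [h3]; ring
  simp only [smul_eq_mul, h1, h2]

lemma exp_split {a b t : ℝ} (ha : 0 < a) (hb : 0 < b) (ht : 0 < t) :
    Real.exp (-(a * t ^ 2) - b / t ^ 2)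
      = Real.exp (-2 * Real.sqrt (a * b)) *
        Real.exp (-a * (t - Real.sqrt b / Real.sqrt a / t) ^ 2) := by
  set c := Real.sqrt b / Real.sqrt a with hcdef
  rw [← Real.exp_add]
  congr 1
  have hsa : Real.sqrt a ^ 2 = a := Real.sq_sqrt ha.le
  have hsb : Real.sqrt b ^ 2 = b := Real.sq_sqrt hb.le
  have hab : Real.sqrt (a * b) = Real.sqrt a * Real.sqrt b := Real.sqrt_mul ha.le b
  have hsa0 : Real.sqrt a ≠ 0 := by positivity
  have ht0 : t ≠ 0 := ht.ne'
  have hc2 : a * c ^ 2 = b := by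
    rw [hcdef, div_pow, hsa, hsb]; field_simp
  have hac : a * c = Real.sqrt (a * b) := by
    rw [hcdef, hab]; field_simp; linear_combination (-1 : ℝ) * hsa
  have e1 : a * (t - c / t) ^ 2 = a * t ^ 2 - 2 * (a * c) + (a * c ^ 2) / t ^ 2 := by
    field_simp; ring
  linear_combination e1 - 2 * hac + (1 / t ^ 2) * hc2

lemma int_exp_quad {a b : ℝ} (ha : 0 < a) (hb : 0 < b) :
    ∫ t in Ioi (0:ℝ), Real.exp (-(a * t ^ 2) - b / t ^ 2)
      = Real.sqrt (π / a) / 2 * Real.exp (-2 * Real.sqrt (a * b)) := by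
  set c := Real.sqrt b / Real.sqrt a with hcdef
  have hc : 0 < c := by positivity
  have step1 : ∀ t ∈ Ioi (0:ℝ), Real.exp (-(a * t ^ 2) - b / t ^ 2)
      = Real.exp (-2 * Real.sqrt (a * b)) * Real.exp (-a * (t - c / t) ^ 2) :=
    fun t ht => exp_split ha hb ht
  rw [setIntegral_congr_fun measurableSet_Ioi step1, integral_const_mul]
  -- integrability
  have hint1 : IntegrableOn (fun t : ℝ => (1 + c / t ^ 2) * Real.exp (-a * (t - c / t) ^ 2))
      (Ioi 0) volume := by
    have h0 := integrableOn_image_iff_integrableOn_abs_deriv_smul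
        measurableSet_Ioi (fun t ht => phi_deriv (c := c) ht) (phi_inj hc)
        (fun u => Real.exp (-a * u ^ 2))
    rw [img_phi hc] at h0
    have hg : IntegrableOn (fun u : ℝ => Real.exp (-a * u ^ 2)) univ volume := by
      rw [integrableOn_univ]; exact integrable_exp_neg_mul_sq ha
    have h1 := h0.1 hg
    apply h1.congr_fun ?_ measurableSet_Ioi
    intro t ht
    have ht' : (0:ℝ) < t := ht
    have hp : (0:ℝ) < 1 + c / t ^ 2 := by positivity
    simp [abs_of_pos hp, smul_eq_mul]
  have hmeas : AEStronglyMeasurable (fun t : ℝ => Real.exp (-a * (t - c / t) ^ 2))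
      (volume.restrict (Ioi 0)) := by
    have m1 : Measurable fun t : ℝ => t - c / t :=
      measurable_id.sub (measurable_const.div measurable_id)
    exact (Real.measurable_exp.comp ((m1.pow_const 2).const_mul (-a))).aestronglyMeasurable
  have hmeas2 : AEStronglyMeasurable (fun t : ℝ => (c / t ^ 2) * Real.exp (-a * (t - c / t) ^ 2))
      (volume.restrict (Ioi 0)) := by
    have m1 : Measurable fun t : ℝ => t - c / t :=
      measurable_id.sub (measurable_const.div measurable_id)
    exact ((measurable_const.div (measurable_id.pow_const 2)).mul
      (Real.measurable_exp.comp ((m1.pow_const 2).const_mul (-a)))).aestronglyMeasurable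
  have hbound : ∀ t ∈ Ioi (0:ℝ), ‖Real.exp (-a * (t - c / t) ^ 2)‖
      ≤ (1 + c / t ^ 2) * Real.exp (-a * (t - c / t) ^ 2) := by
    intro t ht
    have ht' : (0:ℝ) < t := ht
    have h1 : (0:ℝ) < c / t ^ 2 := by positivity
    have h2 := Real.exp_pos (-a * (t - c / t) ^ 2)
    rw [Real.norm_eq_abs, abs_of_pos h2]
    nlinarith
  have hbound2 : ∀ t ∈ Ioi (0:ℝ), ‖(c / t ^ 2) * Real.exp (-a * (t - c / t) ^ 2)‖
      ≤ (1 + c / t ^ 2) * Real.exp (-a * (t - c / t) ^ 2) := by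
    intro t ht
    have ht' : (0:ℝ) < t := ht
    have h1 : (0:ℝ) < c / t ^ 2 := by positivity
    have h2 := Real.exp_pos (-a * (t - c / t) ^ 2)
    rw [Real.norm_eq_abs, abs_of_pos (by positivity)]
    nlinarith
  have hE : IntegrableOn (fun t : ℝ => Real.exp (-a * (t - c / t) ^ 2)) (Ioi 0) volume :=
    hint1.mono' hmeas ((ae_restrict_iff' measurableSet_Ioi).2 (ae_of_all _ hbound))
  have hE2 : IntegrableOn (fun t : ℝ => (c / t ^ 2) * Real.exp (-a * (t - c / t) ^ 2))
      (Ioi 0) volume :=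
    hint1.mono' hmeas2 ((ae_restrict_iff' measurableSet_Ioi).2 (ae_of_all _ hbound2))
  have h2 : (2:ℝ) * ∫ t in Ioi (0:ℝ), Real.exp (-a * (t - c / t) ^ 2)
      = Real.sqrt (π / a) := by
    rw [← glasser ha hc, two_mul]
    nth_rewrite 2 [refl_int hc]
    rw [← integral_add hE hE2]
    apply setIntegral_congr_fun measurableSet_Ioi
    intro t ht
    ring
  have h3 : ∫ t in Ioi (0:ℝ), Real.exp (-a * (t - c / t) ^ 2)
      = Real.sqrt (π / a) / 2 := by linarith
  rw [h3]; ring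

lemma int_halfpow {a b : ℝ} (ha : 0 < a) (hb : 0 < b) :
    ∫ x in Ioi (0:ℝ), x ^ (-(1/2 : ℝ)) * Real.exp (-(a * x) - b / x)
      = Real.sqrt (π / a) * Real.exp (-2 * Real.sqrt (a * b)) := by
  have hderiv : ∀ t ∈ Ioi (0:ℝ),
      HasDerivWithinAt (fun t : ℝ => t ^ 2) (2 * t) (Ioi 0) t := by
    intro t ht
    have h : HasDerivAt (fun t : ℝ => t ^ 2) (2 * t) t := by
      simpa using hasDerivAt_pow 2 t
    exact h.hasDerivWithinAt
  have hinj : InjOn (fun t : ℝ => t ^ 2) (Ioi 0) := by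
    intro x hx y hy h
    have hx' : (0:ℝ) < x := hx
    have hy' : (0:ℝ) < y := hy
    simp only at h
    nlinarith
  have key := integral_image_eq_integral_abs_deriv_smul (f := fun t : ℝ => t ^ 2)
      (f' := fun t : ℝ => 2 * t) measurableSet_Ioi hderiv hinj
      (fun x => x ^ (-(1/2 : ℝ)) * Real.exp (-(a * x) - b / x))
  rw [img_sq] at key
  rw [key]
  have congr1 : ∀ t ∈ Ioi (0:ℝ),
      |2 * t| • ((t ^ 2) ^ (-(1/2 : ℝ)) * Real.exp (-(a * t ^ 2) - b / t ^ 2))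
        = 2 * Real.exp (-(a * t ^ 2) - b / t ^ 2) := by
    intro t ht
    have ht' : (0:ℝ) < t := ht
    have h1 : |2 * t| = 2 * t := abs_of_pos (by linarith)
    have h2 : (t ^ 2 : ℝ) ^ (-(1/2 : ℝ)) = t⁻¹ := by
      rw [← Real.rpow_natCast t 2, ← Real.rpow_mul ht'.le]
      norm_num
      exact Real.rpow_neg_one t
    rw [smul_eq_mul, h1, h2]
    field_simp
  rw [setIntegral_congr_fun measurableSet_Ioi congr1, integral_const_mul,
    int_exp_quad ha hb]
  ring

theorem simplex_mean (μ σ2 : ℝ) (hμ : μ ∈ Set.Ioo (0:ℝ) 1) (hσ : 0 < σ2) :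
    ∫ y in Set.Ioo (0:ℝ) 1, y * simplexPdf μ σ2 y = μ := by
  obtain ⟨hμ0, hμ1⟩ := hμ
  have h1μ : (0:ℝ) < 1 - μ := by linarith
  set m : ℝ := μ / (1 - μ) with hmdef
  have hm : 0 < m := div_pos hμ0 h1μ
  set α : ℝ := 1 / (2 * σ2 * μ ^ 2) with hαdef
  set β : ℝ := m ^ 2 / (2 * σ2 * μ ^ 2) with hβdef
  have hα : 0 < α := by positivity
  have hβ : 0 < β := by positivity
  -- change of variables y = x / (1 + x)
  have hderiv : ∀ x ∈ Ioi (0:ℝ),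
      HasDerivWithinAt (fun x : ℝ => x / (1 + x)) (1 / (1 + x) ^ 2) (Ioi 0) x := by
    intro x hx
    have hx' : (0:ℝ) < x := hx
    have h1x : (0:ℝ) < 1 + x := by linarith
    have h := (hasDerivAt_id x).div ((hasDerivAt_const x 1).add (hasDerivAt_id x)) h1x.ne'
    have e : (1 * (1 + x) - x * (0 + 1)) / (1 + x) ^ 2 = 1 / (1 + x) ^ 2 := by ring
    exact (e ▸ h).hasDerivWithinAt
  have hinj : InjOn (fun x : ℝ => x / (1 + x)) (Ioi 0) := by
    intro x hx y hy h
    have hx' : (0:ℝ) < x := hx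
    have hy' : (0:ℝ) < y := hy
    simp only at h
    rw [div_eq_div_iff (by linarith) (by linarith)] at h
    nlinarith
  have himg : (fun x : ℝ => x / (1 + x)) '' Ioi 0 = Ioo 0 1 := by
    ext y
    constructor
    · rintro ⟨x, hx, rfl⟩
      have hx' : (0:ℝ) < x := hx
      have h1x : (0:ℝ) < 1 + x := by linarith
      constructor
      · positivity
      · rw [div_lt_one h1x]; linarith
    · rintro ⟨hy0, hy1⟩
      refine ⟨y / (1 - y), div_pos hy0 (by linarith), ?_⟩
      have h1y : (0:ℝ) < 1 - y := by linarith
      field_simp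
      ring
  have key := integral_image_eq_integral_abs_deriv_smul (f := fun x : ℝ => x / (1 + x))
      (f' := fun x : ℝ => 1 / (1 + x) ^ 2) measurableSet_Ioi hderiv hinj
      (fun y => y * simplexPdf μ σ2 y)
  rw [himg] at key
  rw [key]
  -- pointwise rewrite of the transformed integrand
  have hsqrtαβ : Real.sqrt (α * β) = m / (2 * σ2 * μ ^ 2) := by
    have h1 : α * β = (m / (2 * σ2 * μ ^ 2)) ^ 2 := by
      rw [hαdef, hβdef]; field_simp
    rw [h1, Real.sqrt_sq (by positivity)]
  have hC : (0:ℝ) < 2 * π * σ2 := by positivity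
  have hptwise : ∀ x ∈ Ioi (0:ℝ),
      |1 / (1 + x) ^ 2| • ((x / (1 + x)) * simplexPdf μ σ2 (x / (1 + x)))
        = ((2 * π * σ2) ^ (-(1/2 : ℝ)) * Real.exp (2 * Real.sqrt (α * β)))
            * (x ^ (-(1/2 : ℝ)) * Real.exp (-(α * x) - β / x)) := by
    intro x hx
    have hx' : (0:ℝ) < x := hx
    have h1x : (0:ℝ) < 1 + x := by linarith
    set y : ℝ := x / (1 + x) with hydef
    have hy0 : 0 < y := by positivity
    have hy1 : y < 1 := by rw [hydef, div_lt_one h1x]; linarith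
    have hyy : 0 < y * (1 - y) := by nlinarith
    -- exponent part
    have hdev : simplexDev y μ = (x - m) ^ 2 / (x * μ ^ 2) := by
      rw [simplexDev, hydef, hmdef]
      rw [div_eq_div_iff (by positivity) (by positivity)]
      field_simp
      ring
    have hexp : -simplexDev y μ / (2 * σ2)
        = 2 * Real.sqrt (α * β) + (-(α * x) - β / x) := by
      rw [hdev, hsqrtαβ, hαdef, hβdef, hmdef]
      field_simp
      ring
    -- coefficient part
    have hA : 2 * π * σ2 * (y * (1 - y)) ^ 3 = (2 * π * σ2 * x) * (x / (1 + x) ^ 3) ^ 2 := by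
      rw [hydef]; field_simp; ring
    have hcoef : |1 / (1 + x) ^ 2| * (y * (2 * π * σ2 * (y * (1 - y)) ^ 3) ^ (-(1/2 : ℝ)))
        = (2 * π * σ2) ^ (-(1/2 : ℝ)) * x ^ (-(1/2 : ℝ)) := by
      have habs : |1 / (1 + x) ^ 2| = 1 / (1 + x) ^ 2 := abs_of_pos (by positivity)
      have hApos : (0:ℝ) < 2 * π * σ2 * (y * (1 - y)) ^ 3 := by positivity
      rw [habs]
      rw [Real.rpow_neg hApos.le, Real.rpow_neg hC.le, Real.rpow_neg hx'.le,
        ← Real.sqrt_eq_rpow, ← Real.sqrt_eq_rpow, ← Real.sqrt_eq_rpow]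
      rw [hA, Real.sqrt_mul (by positivity), Real.sqrt_sq (by positivity),
        Real.sqrt_mul (by positivity)]
      have hs1 : Real.sqrt (2 * π * σ2) ≠ 0 := by positivity
      have hs2 : Real.sqrt x ≠ 0 := by positivity
      rw [hydef]
      field_simp
    rw [simplexPdf, smul_eq_mul, hexp, Real.exp_add]
    calc |1 / (1 + x) ^ 2| * (y * ((2 * π * σ2 * (y * (1 - y)) ^ 3) ^ (-(1/2 : ℝ)) *
            (Real.exp (2 * Real.sqrt (α * β)) * Real.exp (-(α * x) - β / x))))
        = (|1 / (1 + x) ^ 2| * (y * (2 * π * σ2 * (y * (1 - y)) ^ 3) ^ (-(1/2 : ℝ)))) *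
            (Real.exp (2 * Real.sqrt (α * β)) * Real.exp (-(α * x) - β / x)) := by ring
      _ = _ := by rw [hcoef]; ring
  rw [setIntegral_congr_fun measurableSet_Ioi hptwise, integral_const_mul,
    int_halfpow hα hβ]
  -- final arithmetic
  have hexpcancel : Real.exp (2 * Real.sqrt (α * β)) * Real.exp (-2 * Real.sqrt (α * β)) = 1 := by
    rw [← Real.exp_add]; ring_nf; exact Real.exp_zero
  have hπα : π / α = 2 * π * σ2 * μ ^ 2 := by
    rw [hαdef]; field_simp
  have hsq : Real.sqrt (π / α) = Real.sqrt (2 * π * σ2) * μ := by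
    rw [hπα]
    have : 2 * π * σ2 * μ ^ 2 = (2 * π * σ2) * μ ^ 2 := by ring
    rw [this, Real.sqrt_mul hC.le, Real.sqrt_sq hμ0.le]
  rw [hsq]
  rw [Real.rpow_neg hC.le, ← Real.sqrt_eq_rpow]
  have hs1 : Real.sqrt (2 * π * σ2) ≠ 0 := by positivity
  calc (Real.sqrt (2 * π * σ2))⁻¹ * Real.exp (2 * Real.sqrt (α * β)) *
        (Real.sqrt (2 * π * σ2) * μ * Real.exp (-2 * Real.sqrt (α * β)))
      = ((Real.sqrt (2 * π * σ2))⁻¹ * Real.sqrt (2 * π * σ2)) *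
        (Real.exp (2 * Real.sqrt (α * β)) * Real.exp (-2 * Real.sqrt (α * β))) * μ := by ring
    _ = μ := by rw [inv_mul_cancel₀ hs1, hexpcancel]; ring
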